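/- Let 𝓗₂ ⊂ ℝ² be the lattice generated by (1,0) and (1/2,1/2). The set of points y ∈ ℝ² with inf_{x∈𝓗₂} ‖y − x‖₁ = 1/2 (the deep holes of 𝓗₂) is exactly the set {(t, ±(1/2 − t)) : 0 ≤ t ≤ 1/2} + 𝓗₂. -/
import Mathlib

/-- The planar lattice generated by `(1,0)` and `(1/2,1/2)`. -/
def H2 : Set (ℝ × ℝ) := {p | ∃ a b : ℤ, p = ((a : ℝ) + (b : ℝ)/2, (b : ℝ)/2)}

/-- ℓ¹-distance from `y` to the set `H2`. -/
noncomputable def distH2 (y : ℝ × ℝ) : ℝ :=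
  sInf ((fun p => |y.1 - p.1| + |y.2 - p.2|) '' H2)

noncomputable def dI (u : ℝ) : ℝ := |u - round u|

lemma dI_le_half (u : ℝ) : dI u ≤ 1/2 := abs_sub_round u

lemma dI_le (u : ℝ) (n : ℤ) : dI u ≤ |u - n| := by
  rcases eq_or_ne n (round u) with h | h
  · simp [dI, h]
  · have h1 : (1:ℝ) ≤ |(round u : ℝ) - n| := by
      have : (1:ℤ) ≤ |round u - n| := Int.one_le_abs (sub_ne_zero.mpr (Ne.symm h))
      calc (1:ℝ) = ((1:ℤ):ℝ) := by norm_num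
        _ ≤ ((|round u - n| : ℤ) : ℝ) := by exact_mod_cast this
        _ = |(round u : ℝ) - n| := by push_cast; rfl
    have h2 := abs_sub_round u
    have h3 : |(round u:ℝ) - n| ≤ |u - round u| + |u - n| := by
      calc |(round u:ℝ) - n| = |((round u:ℝ) - u) + (u - n)| := by ring_nf
        _ ≤ |(round u:ℝ) - u| + |u - n| := abs_add_le _ _
        _ = |u - round u| + |u - n| := by rw [abs_sub_comm]
    simp only [dI]
    linarith

lemma abs_add_abs_eq_max (a b : ℝ) : |a| + |b| = max |a+b| |a-b| := by
  apply le_antisymm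
  · rcases le_total 0 a with ha|ha <;> rcases le_total 0 b with hb|hb
    · exact le_max_of_le_left (le_of_eq (by
        rw [abs_of_nonneg ha, abs_of_nonneg hb, abs_of_nonneg (by linarith)]))
    · exact le_max_of_le_right (le_of_eq (by
        rw [abs_of_nonneg ha, abs_of_nonpos hb, abs_of_nonneg (by linarith)]; ring))
    · exact le_max_of_le_right (le_of_eq (by
        rw [abs_of_nonpos ha, abs_of_nonneg hb, abs_of_nonpos (by linarith)]; ring))
    · exact le_max_of_le_left (le_of_eq (by
        rw [abs_of_nonpos ha, abs_of_nonpos hb, abs_of_nonpos (by linarith)]; ring))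
  · exact max_le (abs_add_le a b) (abs_sub a b)

lemma distH2_eq (y : ℝ × ℝ) :
    distH2 y = max (dI (y.1 + y.2)) (dI (y.1 - y.2)) := by
  have hmem : max (dI (y.1 + y.2)) (dI (y.1 - y.2)) ∈
      (fun p => |y.1 - p.1| + |y.2 - p.2|) '' H2 := by
    refine ⟨((round (y.1 - y.2) : ℝ) + ((round (y.1 + y.2) : ℝ) - (round (y.1 - y.2) : ℝ))/2,
        ((round (y.1 + y.2) : ℝ) - (round (y.1 - y.2) : ℝ))/2),
      ⟨round (y.1 - y.2), round (y.1 + y.2) - round (y.1 - y.2), by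
        simp only [Prod.mk.injEq]; constructor <;> (push_cast; ring)⟩, ?_⟩
    simp only []
    rw [abs_add_abs_eq_max]
    congr 1
    · congr 1; ring
    · congr 1; ring
  refine le_antisymm (csInf_le ⟨0, ?_⟩ hmem) (le_csInf ⟨_, hmem⟩ ?_)
  · rintro r ⟨p, -, rfl⟩; positivity
  · rintro r ⟨p, ⟨a, b, rfl⟩, rfl⟩
    simp only []
    have e1 : y.1 - ((a:ℝ) + (b:ℝ)/2) + (y.2 - (b:ℝ)/2) = (y.1 + y.2) - ((a + b : ℤ) : ℝ) := by
      push_cast; ring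
    have e2 : y.1 - ((a:ℝ) + (b:ℝ)/2) - (y.2 - (b:ℝ)/2) = (y.1 - y.2) - ((a : ℤ) : ℝ) := by
      ring
    rw [abs_add_abs_eq_max, e1, e2]
    exact max_le_max (dI_le _ _) (dI_le _ _)

lemma half_le_abs (k m : ℤ) : (1:ℝ)/2 ≤ |(k:ℝ) + 1/2 - m| := by
  rcases le_or_gt m k with h | h
  · have : (m:ℝ) ≤ k := by exact_mod_cast h
    rw [abs_of_nonneg (by linarith)]; linarith
  · have : (k:ℝ) + 1 ≤ m := by exact_mod_cast h
    rw [abs_of_nonpos (by linarith)]; linarith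

lemma dI_half (u : ℝ) (k : ℤ) (h : u = (k:ℝ) + 1/2) : dI u = 1/2 := by
  subst h
  refine le_antisymm (dI_le_half _) ?_
  simpa [dI] using half_le_abs k (round ((k:ℝ) + 1/2))

theorem stmt9 :
    {y : ℝ × ℝ | distH2 y = 1/2} =
      {y | ∃ t : ℝ, 0 ≤ t ∧ t ≤ 1/2 ∧ ∃ p ∈ H2,
        y = (t, 1/2 - t) + p ∨ y = (t, t - 1/2) + p} := by
  ext y
  simp only [Set.mem_setOf_eq]
  rw [distH2_eq]
  constructor
  · intro h
    have hcase : dI (y.1 + y.2) = 1/2 ∨ dI (y.1 - y.2) = 1/2 := by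
      rcases max_choice (dI (y.1 + y.2)) (dI (y.1 - y.2)) with hc | hc <;>
        rw [hc] at h
      · exact Or.inl h
      · exact Or.inr h
    have exk : ∀ w : ℝ, dI w = 1/2 → ∃ k : ℤ, w = (k:ℝ) + 1/2 := by
      intro w hw
      rcases (abs_eq (by norm_num : (0:ℝ) ≤ 1/2)).mp hw with h' | h'
      · exact ⟨round w, by linarith⟩
      · exact ⟨round w - 1, by push_cast; linarith⟩
    rcases hcase with hu | hv
    · obtain ⟨k, hk⟩ := exk _ hu
      set m := round (y.1 - y.2) with hmdef
      have hm := abs_le.mp (abs_sub_round (y.1 - y.2))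
      refine ⟨(y.1 - y.2 - m + 1/2)/2, by linarith [hm.1], by linarith [hm.2],
        ((m:ℝ) + ((k:ℝ) - (m:ℝ))/2, ((k:ℝ) - (m:ℝ))/2),
        ⟨m, k - m, by simp only [Prod.mk.injEq]; constructor <;> (push_cast; ring)⟩,
        Or.inl ?_⟩
      have : y.1 + y.2 = (k:ℝ) + 1/2 := hk
      simp only [Prod.mk_add_mk, Prod.mk.injEq, Prod.ext_iff]
      constructor <;> linarith
    · obtain ⟨k, hk⟩ := exk _ hv
      set m := round (y.1 + y.2) with hmdef
      have hm := abs_le.mp (abs_sub_round (y.1 + y.2))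
      refine ⟨(y.1 + y.2 - m + 1/2)/2, by linarith [hm.1], by linarith [hm.2],
        ((k:ℝ) + ((m:ℝ) - (k:ℝ))/2, ((m:ℝ) - (k:ℝ))/2),
        ⟨k, m - k, by simp only [Prod.mk.injEq]; constructor <;> (push_cast; ring)⟩,
        Or.inr ?_⟩
      have : y.1 - y.2 = (k:ℝ) + 1/2 := hk
      simp only [Prod.mk_add_mk, Prod.mk.injEq, Prod.ext_iff]
      constructor <;> linarith
  · rintro ⟨t, ht0, ht1, p, ⟨a, b, rfl⟩, h | h⟩ <;> subst h <;>
      simp only [Prod.mk_add_mk, Prod.fst, Prod.snd]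
    · have h1 : dI ((t + ((a:ℝ) + (b:ℝ)/2)) + (1/2 - t + (b:ℝ)/2)) = 1/2 := by
        apply dI_half _ (a + b)
        push_cast; ring
      have := dI_le_half ((t + ((a:ℝ) + (b:ℝ)/2)) - (1/2 - t + (b:ℝ)/2))
      rw [max_eq_left]
      · exact h1
      · rw [h1]; exact this
    · have h1 : dI ((t + ((a:ℝ) + (b:ℝ)/2)) - (t - 1/2 + (b:ℝ)/2)) = 1/2 := by
        apply dI_half _ a
        ring
      have := dI_le_half ((t + ((a:ℝ) + (b:ℝ)/2)) + (t - 1/2 + (b:ℝ)/2))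
      rw [max_eq_right]
      · exact h1
      · rw [h1]; exact this
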